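/- Let G₁ be an edge-regular graph with parameters (n₁, k₁, λ₁) and G₂ an edge-regular graph with parameters (n₂, k₂, λ₂), each containing at least one edge, with n₁ ≥ 1 and n₂ ≥ 1. Then the join G₁ ∨ G₂ is edge-regular with parameters (n₁+n₂, k, λ) for some k and λ if and only if k₁ + n₂ = k₂ + n₁ and λ₁ + n₂ = λ₂ + n₁ = k₁ + k₂, in which case k = k₁ + n₂ and λ = k₁ + k₂. -/

import Mathlib

open SimpleGraph

def SimpleGraph.IsEdgeRegular {V : Type*} [Fintype V] (G : SimpleGraph V) (n k l : ℕ) : Prop :=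
  Fintype.card V = n ∧ (∀ v : V, (G.neighborSet v).ncard = k) ∧
    ∀ u v : V, G.Adj u v → (G.commonNeighbors u v).ncard = l

/-- The join of two simple graphs on disjoint vertex sets. -/
def SimpleGraph.joinGraph {V₁ V₂ : Type*} (G₁ : SimpleGraph V₁) (G₂ : SimpleGraph V₂) :
    SimpleGraph (V₁ ⊕ V₂) where
  Adj x y := match x, y with
    | Sum.inl a, Sum.inl b => G₁.Adj a b
    | Sum.inr a, Sum.inr b => G₂.Adj a b
    | Sum.inl _, Sum.inr _ => True
    | Sum.inr _, Sum.inl _ => True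
  symm := ⟨by rintro (a | a) (b | b) h <;> first | exact h.symm | trivial⟩
  loopless := ⟨by rintro (a | a) h <;> simp_all [SimpleGraph.irrefl]⟩

lemma ncard_inl_union_inr {V₁ V₂ : Type*} [Fintype V₁] [Fintype V₂] (s : Set V₁) (t : Set V₂) :
    ((Sum.inl '' s ∪ Sum.inr '' t : Set (V₁ ⊕ V₂))).ncard = s.ncard + t.ncard := by
  rw [Set.ncard_union_eq, Set.ncard_image_of_injective _ Sum.inl_injective,
    Set.ncard_image_of_injective _ Sum.inr_injective]
  · rw [Set.disjoint_left]
    rintro x ⟨a, _, rfl⟩ ⟨b, _, h⟩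
    simp at h

lemma join_nbhd_inl {V₁ V₂ : Type*} (G₁ : SimpleGraph V₁) (G₂ : SimpleGraph V₂) (a : V₁) :
    (G₁.joinGraph G₂).neighborSet (Sum.inl a) =
      Sum.inl '' G₁.neighborSet a ∪ Sum.inr '' Set.univ := by
  ext (x | x) <;> simp [joinGraph, mem_neighborSet]

lemma join_nbhd_inr {V₁ V₂ : Type*} (G₁ : SimpleGraph V₁) (G₂ : SimpleGraph V₂) (b : V₂) :
    (G₁.joinGraph G₂).neighborSet (Sum.inr b) =
      Sum.inl '' Set.univ ∪ Sum.inr '' G₂.neighborSet b := by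
  ext (x | x) <;> simp [joinGraph, mem_neighborSet]

lemma join_cn_ll {V₁ V₂ : Type*} (G₁ : SimpleGraph V₁) (G₂ : SimpleGraph V₂) (a b : V₁) :
    (G₁.joinGraph G₂).commonNeighbors (Sum.inl a) (Sum.inl b) =
      Sum.inl '' G₁.commonNeighbors a b ∪ Sum.inr '' Set.univ := by
  ext (x | x) <;> simp [joinGraph, commonNeighbors, mem_neighborSet]

lemma join_cn_rr {V₁ V₂ : Type*} (G₁ : SimpleGraph V₁) (G₂ : SimpleGraph V₂) (a b : V₂) :
    (G₁.joinGraph G₂).commonNeighbors (Sum.inr a) (Sum.inr b) =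
      Sum.inl '' Set.univ ∪ Sum.inr '' G₂.commonNeighbors a b := by
  ext (x | x) <;> simp [joinGraph, commonNeighbors, mem_neighborSet]

lemma join_cn_lr {V₁ V₂ : Type*} (G₁ : SimpleGraph V₁) (G₂ : SimpleGraph V₂) (a : V₁) (b : V₂) :
    (G₁.joinGraph G₂).commonNeighbors (Sum.inl a) (Sum.inr b) =
      Sum.inl '' G₁.neighborSet a ∪ Sum.inr '' G₂.neighborSet b := by
  ext (x | x) <;> simp [joinGraph, commonNeighbors, mem_neighborSet]

theorem stmt_7 {V₁ V₂ : Type*} [Fintype V₁] [Fintype V₂]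
    (G₁ : SimpleGraph V₁) (G₂ : SimpleGraph V₂) (n₁ k₁ l₁ n₂ k₂ l₂ : ℕ)
    (h₁ : G₁.IsEdgeRegular n₁ k₁ l₁) (h₂ : G₂.IsEdgeRegular n₂ k₂ l₂)
    (he₁ : ∃ a b : V₁, G₁.Adj a b) (he₂ : ∃ a b : V₂, G₂.Adj a b)
    (hn₁ : 1 ≤ n₁) (hn₂ : 1 ≤ n₂) :
    ((∃ k l : ℕ, (G₁.joinGraph G₂).IsEdgeRegular (n₁ + n₂) k l) ↔
        (k₁ + n₂ = k₂ + n₁ ∧ l₁ + n₂ = l₂ + n₁ ∧ l₂ + n₁ = k₁ + k₂)) ∧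
      ((k₁ + n₂ = k₂ + n₁ ∧ l₁ + n₂ = l₂ + n₁ ∧ l₂ + n₁ = k₁ + k₂) →
        (G₁.joinGraph G₂).IsEdgeRegular (n₁ + n₂) (k₁ + n₂) (k₁ + k₂)) := by
  obtain ⟨hc₁, hd₁, hl₁⟩ := h₁
  obtain ⟨hc₂, hd₂, hl₂⟩ := h₂
  have hu₁ : (Set.univ : Set V₁).ncard = n₁ := by rw [Set.ncard_univ, Nat.card_eq_fintype_card, hc₁]
  have hu₂ : (Set.univ : Set V₂).ncard = n₂ := by rw [Set.ncard_univ, Nat.card_eq_fintype_card, hc₂]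
  have hcard : Fintype.card (V₁ ⊕ V₂) = n₁ + n₂ := by
    rw [Fintype.card_sum, hc₁, hc₂]
  have hdegl : ∀ a : V₁, ((G₁.joinGraph G₂).neighborSet (Sum.inl a)).ncard = k₁ + n₂ := by
    intro a; rw [join_nbhd_inl, ncard_inl_union_inr, hd₁, hu₂]
  have hdegr : ∀ b : V₂, ((G₁.joinGraph G₂).neighborSet (Sum.inr b)).ncard = k₂ + n₁ := by
    intro b; rw [join_nbhd_inr, ncard_inl_union_inr, hd₂, hu₁, Nat.add_comm]
  have hcnll : ∀ a b : V₁, G₁.Adj a b →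
      ((G₁.joinGraph G₂).commonNeighbors (Sum.inl a) (Sum.inl b)).ncard = l₁ + n₂ := by
    intro a b hab; rw [join_cn_ll, ncard_inl_union_inr, hl₁ a b hab, hu₂]
  have hcnrr : ∀ a b : V₂, G₂.Adj a b →
      ((G₁.joinGraph G₂).commonNeighbors (Sum.inr a) (Sum.inr b)).ncard = l₂ + n₁ := by
    intro a b hab; rw [join_cn_rr, ncard_inl_union_inr, hl₂ a b hab, hu₁, Nat.add_comm]
  have hcnlr : ∀ (a : V₁) (b : V₂),
      ((G₁.joinGraph G₂).commonNeighbors (Sum.inl a) (Sum.inr b)).ncard = k₁ + k₂ := by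
    intro a b; rw [join_cn_lr, ncard_inl_union_inr, hd₁, hd₂]
  have hne₁ : Nonempty V₁ := Fintype.card_pos_iff.mp (by omega)
  have hne₂ : Nonempty V₂ := Fintype.card_pos_iff.mp (by omega)
  have key : (k₁ + n₂ = k₂ + n₁ ∧ l₁ + n₂ = l₂ + n₁ ∧ l₂ + n₁ = k₁ + k₂) →
      (G₁.joinGraph G₂).IsEdgeRegular (n₁ + n₂) (k₁ + n₂) (k₁ + k₂) := by
    rintro ⟨e1, e2, e3⟩
    refine ⟨hcard, ?_, ?_⟩
    · rintro (v | v)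
      · exact hdegl v
      · rw [hdegr v]; omega
    · rintro (u | u) (v | v) h
      · rw [hcnll u v h]; omega
      · exact hcnlr u v
      · rw [commonNeighbors_symm]; exact hcnlr v u
      · rw [hcnrr u v h]; omega
  refine ⟨⟨?_, fun h => ⟨k₁ + n₂, k₁ + k₂, key h⟩⟩, key⟩
  rintro ⟨k, l, _, hdeg, hcn⟩
  obtain ⟨a₁, b₁, hab₁⟩ := he₁
  obtain ⟨a₂, b₂, hab₂⟩ := he₂
  obtain ⟨v₁⟩ := hne₁
  obtain ⟨v₂⟩ := hne₂
  have e1 := (hdeg (Sum.inl v₁)).symm.trans (hdegl v₁)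
  have e2 := (hdeg (Sum.inr v₂)).symm.trans (hdegr v₂)
  have e3 := (hcn (Sum.inl a₁) (Sum.inl b₁)
    (show (G₁.joinGraph G₂).Adj (Sum.inl a₁) (Sum.inl b₁) from hab₁)).symm.trans
    (hcnll a₁ b₁ hab₁)
  have e4 := (hcn (Sum.inr a₂) (Sum.inr b₂)
    (show (G₁.joinGraph G₂).Adj (Sum.inr a₂) (Sum.inr b₂) from hab₂)).symm.trans
    (hcnrr a₂ b₂ hab₂)
  have e5 := (hcn (Sum.inl v₁) (Sum.inr v₂) trivial).symm.trans (hcnlr v₁ v₂)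
  omega
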